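/- Let r ∈ (1, ∞) and 0 ≤ L < 1, and let f : 𝒜 → 𝒜 be a mapping satisfying f(r x) = r f(x) for all x ∈ 𝒜. Suppose φ : 𝒜 × 𝒜 × 𝒜 → [0, ∞) satisfies ‖r μ f((a+b)/r) + r μ f((a−b)/r) − 2 f(μ a) + f(c c* c) − f(c) c* c − c (f(c))* c − c c* f(c)‖ ≤ φ(a, b, c) for all μ ∈ 𝕋 and all a, b, c ∈ 𝒜, and φ(x, y, z) ≤ r L φ(x/r, y/r, z/r) for all x, y, z ∈ 𝒜. Then f is a J*-derivation on 𝒜. -/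

import Mathlib

open ContinuousLinearMap Filter

variable {H K : Type*} [NormedAddCommGroup H] [InnerProductSpace ℂ H] [CompleteSpace H]
  [NormedAddCommGroup K] [InnerProductSpace ℂ K] [CompleteSpace K]

/-- `𝒜` is closed under the `J*`-triple product `x ↦ x x* x`. -/
def JStarClosed (𝒜 : Submodule ℂ (H →L[ℂ] K)) : Prop :=
  ∀ x : H →L[ℂ] K, x ∈ 𝒜 → (x ∘L adjoint x) ∘L x ∈ 𝒜

/-- The triple product `c c* c` as an element of `𝒜`. -/
noncomputable def cube (𝒜 : Submodule ℂ (H →L[ℂ] K)) (hA : JStarClosed 𝒜) (c : 𝒜) : 𝒜 :=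
  ⟨((c : H →L[ℂ] K) ∘L adjoint (c : H →L[ℂ] K)) ∘L (c : H →L[ℂ] K), hA c c.2⟩

/-- `D : 𝒜 → 𝒜` is a `J*`-derivation: it is `ℂ`-linear and satisfies
`D(c c* c) = D(c) c* c + c (D(c))* c + c c* D(c)`. -/
noncomputable def IsJStarDerivation (𝒜 : Submodule ℂ (H →L[ℂ] K)) (hA : JStarClosed 𝒜)
    (D : 𝒜 → 𝒜) : Prop :=
  (∀ a b : 𝒜, D (a + b) = D a + D b) ∧
  (∀ (z : ℂ) (a : 𝒜), D (z • a) = z • D a) ∧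
  (∀ c : 𝒜, (D (cube 𝒜 hA c) : H →L[ℂ] K) =
      ((D c : H →L[ℂ] K) ∘L adjoint (c : H →L[ℂ] K)) ∘L (c : H →L[ℂ] K) +
      ((c : H →L[ℂ] K) ∘L adjoint (D c : H →L[ℂ] K)) ∘L (c : H →L[ℂ] K) +
      ((c : H →L[ℂ] K) ∘L adjoint (c : H →L[ℂ] K)) ∘L (D c : H →L[ℂ] K))

/-- The defect of the generalized Jensen functional equation combined with the
`J*`-derivation identity, for a map `f : 𝒜 → 𝒜`, parameter `r` and scalar `μ`. -/
noncomputable def jensenDefect (𝒜 : Submodule ℂ (H →L[ℂ] K)) (hA : JStarClosed 𝒜)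
    (r : ℝ) (f : 𝒜 → 𝒜) (μ : ℂ) (a b c : 𝒜) : H →L[ℂ] K :=
  ((r : ℂ) * μ) • (f ((r : ℂ)⁻¹ • (a + b)) : H →L[ℂ] K) +
  ((r : ℂ) * μ) • (f ((r : ℂ)⁻¹ • (a - b)) : H →L[ℂ] K) -
  (2 : ℂ) • (f (μ • a) : H →L[ℂ] K) +
  (f (cube 𝒜 hA c) : H →L[ℂ] K) -
  ((f c : H →L[ℂ] K) ∘L adjoint (c : H →L[ℂ] K)) ∘L (c : H →L[ℂ] K) -
  ((c : H →L[ℂ] K) ∘L adjoint (f c : H →L[ℂ] K)) ∘L (c : H →L[ℂ] K) -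
  ((c : H →L[ℂ] K) ∘L adjoint (c : H →L[ℂ] K)) ∘L (f c : H →L[ℂ] K)

/-- Theorem 3.4 (superstability via the fixed point alternative): if `f(rx) = rf(x)`,
the Jensen/`J*` defect of `f` is controlled by `φ`, and
`φ(x,y,z) ≤ rL φ(x/r, y/r, z/r)` for some `L < 1`, then `f` is a `J*`-derivation. -/
lemma eq_zero_of_norm_le_geom {V : Type*} [NormedAddCommGroup V] (v : V) (C M : ℝ)
    (hM0 : 0 ≤ M) (hM1 : M < 1) (h : ∀ n : ℕ, ‖v‖ ≤ M ^ n * C) : v = 0 := by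
  have h0 : Tendsto (fun n : ℕ => M ^ n * C) atTop (nhds 0) := by
    simpa using (tendsto_pow_atTop_nhds_zero_of_lt_one hM0 hM1).mul_const C
  have hv : ‖v‖ ≤ 0 := ge_of_tendsto' h0 h
  simpa using le_antisymm hv (norm_nonneg v)

set_option maxHeartbeats 1000000 in
theorem superstability_JStarDerivation_fixedPoint
    (𝒜 : Submodule ℂ (H →L[ℂ] K)) (hclosed : IsClosed (𝒜 : Set (H →L[ℂ] K)))
    (hA : JStarClosed 𝒜)
    (r : ℝ) (hr : 1 < r) (L : ℝ) (hL0 : 0 ≤ L) (hL1 : L < 1)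
    (f : 𝒜 → 𝒜) (hfr : ∀ x : 𝒜, f ((r : ℂ) • x) = (r : ℂ) • f x)
    (φ : 𝒜 → 𝒜 → 𝒜 → ℝ) (hφ0 : ∀ a b c : 𝒜, 0 ≤ φ a b c)
    (hineq : ∀ (μ : ℂ), ‖μ‖ = 1 → ∀ a b c : 𝒜, ‖jensenDefect 𝒜 hA r f μ a b c‖ ≤ φ a b c)
    (hφ : ∀ x y z : 𝒜,
      φ x y z ≤ r * L * φ ((r : ℂ)⁻¹ • x) ((r : ℂ)⁻¹ • y) ((r : ℂ)⁻¹ • z)) :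
    IsJStarDerivation 𝒜 hA f := by
  have hr0 : (0:ℝ) < r := lt_trans one_pos hr
  have hrne : (r:ℂ) ≠ 0 := by
    simp only [ne_eq, Complex.ofReal_eq_zero]; exact ne_of_gt hr0
  have hrne1 : (r:ℂ) ≠ 1 := by
    simp only [ne_eq, Complex.ofReal_eq_one]; exact ne_of_gt hr
  -- f 0 = 0
  have hf0 : f 0 = 0 := by
    have h := hfr 0
    rw [smul_zero] at h
    have h2 : ((r:ℂ) - 1) • f 0 = (r:ℂ) • f 0 - f 0 := by module
    rw [← h, sub_self] at h2
    have hr1ne : (r:ℂ) - 1 ≠ 0 := by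
      intro hcon
      exact hrne1 (by linear_combination hcon)
    calc f 0 = (((r:ℂ)-1)⁻¹ * ((r:ℂ)-1)) • f 0 := by
          rw [inv_mul_cancel₀ hr1ne, one_smul]
      _ = ((r:ℂ)-1)⁻¹ • (((r:ℂ)-1) • f 0) := by rw [mul_smul]
      _ = 0 := by rw [h2, smul_zero]
  -- f (r⁻¹ • x) = r⁻¹ • f x
  have hscale : ∀ x : 𝒜, f ((r:ℂ)⁻¹ • x) = (r:ℂ)⁻¹ • f x := by
    intro x
    have h := hfr ((r:ℂ)⁻¹ • x)
    rw [smul_inv_smul₀ hrne] at h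
    rw [h, inv_smul_smul₀ hrne]
  -- iterated control by φ
  have hφn : ∀ (n : ℕ) (x y z : 𝒜),
      φ ((r:ℂ)^n • x) ((r:ℂ)^n • y) ((r:ℂ)^n • z) ≤ (r*L)^n * φ x y z := by
    intro n
    induction n with
    | zero => intro x y z; simp
    | succ n ih =>
      intro x y z
      have h1 := hφ ((r:ℂ)^(n+1) • x) ((r:ℂ)^(n+1) • y) ((r:ℂ)^(n+1) • z)
      have e : ∀ w : 𝒜, (r:ℂ)⁻¹ • ((r:ℂ)^(n+1) • w) = (r:ℂ)^n • w := by
        intro w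
        match_scalars
        field_simp
        ring
      rw [e, e, e] at h1
      calc φ ((r:ℂ)^(n+1) • x) ((r:ℂ)^(n+1) • y) ((r:ℂ)^(n+1) • z)
          ≤ r * L * φ ((r:ℂ)^n • x) ((r:ℂ)^n • y) ((r:ℂ)^n • z) := h1
        _ ≤ r * L * ((r*L)^n * φ x y z) :=
            mul_le_mul_of_nonneg_left (ih x y z) (by positivity)
        _ = (r*L)^(n+1) * φ x y z := by ring
  -- cube of zero
  have hcube0 : cube 𝒜 hA (0 : 𝒜) = 0 := by
    apply Subtype.ext
    simp [cube]
  -- jensenDefect with c = 0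
  have hJc0 : ∀ (μ : ℂ) (a b : 𝒜), jensenDefect 𝒜 hA r f μ a b 0 =
      ((r : ℂ) * μ) • (f ((r : ℂ)⁻¹ • (a + b)) : H →L[ℂ] K) +
      ((r : ℂ) * μ) • (f ((r : ℂ)⁻¹ • (a - b)) : H →L[ℂ] K) -
      (2 : ℂ) • (f (μ • a) : H →L[ℂ] K) := by
    intro μ a b
    simp [jensenDefect, hcube0, hf0]
  -- scaling of the Jensen defect
  have hJscale : ∀ (μ : ℂ) (a b : 𝒜),
      jensenDefect 𝒜 hA r f μ ((r:ℂ) • a) ((r:ℂ) • b) 0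
        = (r:ℂ) • jensenDefect 𝒜 hA r f μ a b 0 := by
    intro μ a b
    rw [hJc0, hJc0]
    have h1 : (r:ℂ)⁻¹ • ((r:ℂ) • a + (r:ℂ) • b) = a + b := by
      match_scalars <;> field_simp
    have h2 : (r:ℂ)⁻¹ • ((r:ℂ) • a - (r:ℂ) • b) = a - b := by
      match_scalars <;> field_simp
    have h3 : μ • ((r:ℂ) • a) = (r:ℂ) • (μ • a) := smul_comm μ (r:ℂ) a
    rw [h1, h2, h3, hfr (μ • a), hscale (a+b), hscale (a-b)]
    push_cast [Submodule.coe_smul]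
    match_scalars <;> · field_simp; try ring
  -- the Jensen defect (with c = 0) vanishes
  have hJzero : ∀ (μ : ℂ), ‖μ‖ = 1 → ∀ a b : 𝒜, jensenDefect 𝒜 hA r f μ a b 0 = 0 := by
    intro μ hμ a b
    apply eq_zero_of_norm_le_geom _ (φ a b 0) L hL0 hL1
    intro n
    have hpow : ∀ m : ℕ, jensenDefect 𝒜 hA r f μ ((r:ℂ)^m • a) ((r:ℂ)^m • b) 0
        = (r:ℂ)^m • jensenDefect 𝒜 hA r f μ a b 0 := by
      intro m
      induction m with
      | zero => simp
      | succ m ih =>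
        have e : ∀ w : 𝒜, (r:ℂ)^(m+1) • w = (r:ℂ) • ((r:ℂ)^m • w) := by
          intro w; match_scalars; ring
        rw [e a, e b, hJscale, ih, smul_smul]
        congr 1
        ring
    have hb0 := hineq μ hμ ((r:ℂ)^n • a) ((r:ℂ)^n • b) 0
    rw [hpow n] at hb0
    have hnr : ‖(r:ℂ)^n‖ = r^n := by
      rw [norm_pow, Complex.norm_real, Real.norm_eq_abs, abs_of_pos hr0]
    have hb : r^n * ‖jensenDefect 𝒜 hA r f μ a b 0‖
        ≤ φ ((r:ℂ)^n • a) ((r:ℂ)^n • b) 0 := by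
      rw [← hnr, ← norm_smul]; exact hb0
    have hb2 : φ ((r:ℂ)^n • a) ((r:ℂ)^n • b) 0 ≤ (r*L)^n * φ a b 0 := by
      have h := hφn n a b 0
      rwa [smul_zero] at h
    have h3 : r^n * ‖jensenDefect 𝒜 hA r f μ a b 0‖ ≤ r^n * (L^n * φ a b 0) := by
      calc r^n * ‖jensenDefect 𝒜 hA r f μ a b 0‖ ≤ (r*L)^n * φ a b 0 := le_trans hb hb2
        _ = r^n * (L^n * φ a b 0) := by rw [mul_pow]; ring
    exact le_of_mul_le_mul_left h3 (pow_pos hr0 n)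
  -- the exact Jensen equation, inside 𝒜
  have hJeq : ∀ (μ : ℂ), ‖μ‖ = 1 → ∀ a b : 𝒜,
      μ • f (a + b) + μ • f (a - b) = (2:ℂ) • f (μ • a) := by
    intro μ hμ a b
    have h := hJzero μ hμ a b
    rw [hJc0, hscale (a+b), hscale (a-b), sub_eq_zero] at h
    apply Subtype.ext
    have h2 : (((r : ℂ) * μ) • ((r:ℂ)⁻¹ • f (a+b) : 𝒜) : H →L[ℂ] K)
        + (((r : ℂ) * μ) • ((r:ℂ)⁻¹ • f (a-b) : 𝒜) : H →L[ℂ] K)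
        = ((2:ℂ) • f (μ • a) : 𝒜) := by
      push_cast [Submodule.coe_smul] at h ⊢
      rw [h]
    push_cast [Submodule.coe_smul] at h2 ⊢
    rw [← h2]
    match_scalars <;> · field_simp; try ring
  -- additivity
  have hadd : ∀ u v : 𝒜, f (u + v) = f u + f v := by
    have hQ : ∀ a b : 𝒜, f (a + b) + f (a - b) = (2:ℂ) • f a := by
      intro a b
      have h := hJeq 1 (by simp) a b
      simpa using h
    have h2a : ∀ a : 𝒜, f (a + a) = (2:ℂ) • f a := by
      intro a
      have h := hQ a a
      rw [sub_self, hf0, add_zero] at h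
      exact h
    intro u v
    have ha : ((2:ℂ)⁻¹ • (u + v)) + ((2:ℂ)⁻¹ • (u - v)) = u := by
      match_scalars <;> norm_num
    have hb : ((2:ℂ)⁻¹ • (u + v)) - ((2:ℂ)⁻¹ • (u - v)) = v := by
      match_scalars <;> norm_num
    have h := hQ ((2:ℂ)⁻¹ • (u + v)) ((2:ℂ)⁻¹ • (u - v))
    rw [ha, hb] at h
    have h2 := h2a ((2:ℂ)⁻¹ • (u + v))
    have hc : ((2:ℂ)⁻¹ • (u + v)) + ((2:ℂ)⁻¹ • (u + v)) = u + v := by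
      match_scalars <;> norm_num
    rw [hc] at h2
    rw [← h2] at h
    exact h.symm
  -- homogeneity for unit scalars
  have hmu : ∀ (μ : ℂ), ‖μ‖ = 1 → ∀ a : 𝒜, f (μ • a) = μ • f a := by
    intro μ hμ a
    have h := hJeq μ hμ a 0
    rw [add_zero, sub_zero] at h
    have h2 : (2:ℂ) • (μ • f a) = (2:ℂ) • f (μ • a) := by
      rw [← h]; module
    have := smul_right_injective 𝒜 (two_ne_zero (α := ℂ)) h2
    exact this.symm
  -- ℕ-homogeneity
  have hnat : ∀ (n : ℕ) (a : 𝒜), f ((n:ℂ) • a) = (n:ℂ) • f a := by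
    intro n
    induction n with
    | zero => intro a; simp [hf0]
    | succ n ih =>
      intro a
      have e : ((n:ℂ)+1) • a = (n:ℂ) • a + a := by module
      push_cast
      rw [e, hadd, ih]
      module
  -- real homogeneity for |t| ≤ 2
  have hreal2 : ∀ (t : ℝ), |t| ≤ 2 → ∀ a : 𝒜, f ((t:ℂ) • a) = (t:ℂ) • f a := by
    intro t ht a
    set θ : ℝ := Real.arccos (t/2) with hθ
    have hcos : Real.cos θ = t/2 := by
      apply Real.cos_arccos
      · linarith [abs_le.mp ht |>.1]
      · linarith [abs_le.mp ht |>.2]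
    set μ : ℂ := Complex.exp (θ * Complex.I) with hμdef
    set ν : ℂ := Complex.exp (-θ * Complex.I) with hνdef
    have hμ1 : ‖μ‖ = 1 := by
      rw [hμdef, Complex.norm_exp_ofReal_mul_I]
    have hν1 : ‖ν‖ = 1 := by
      rw [hνdef]
      have : ((-θ : ℝ) : ℂ) * Complex.I = -↑θ * Complex.I := by push_cast; ring
      rw [← this, Complex.norm_exp_ofReal_mul_I]
    have hsum : μ + ν = (t:ℂ) := by
      rw [hμdef, hνdef, Complex.exp_mul_I, Complex.exp_mul_I]
      rw [Complex.cos_neg, Complex.sin_neg]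
      have : Complex.cos θ = ((t/2 : ℝ) : ℂ) := by
        rw [← Complex.ofReal_cos, hcos]
      rw [this]
      push_cast
      ring
    have hsplit : (t:ℂ) • a = μ • a + ν • a := by
      rw [← hsum]; module
    rw [hsplit, hadd, hmu μ hμ1, hmu ν hν1, ← add_smul, hsum]
  -- full real homogeneity
  have hrealAll : ∀ (t : ℝ) (a : 𝒜), f ((t:ℂ) • a) = (t:ℂ) • f a := by
    intro t a
    set n : ℕ := ⌈|t|⌉₊ + 1 with hn
    have hnpos : (0:ℝ) < n := by positivity
    have hnne : (n:ℝ) ≠ 0 := ne_of_gt hnpos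
    have htn : |t / n| ≤ 2 := by
      rw [abs_div, abs_of_pos hnpos, div_le_iff₀ hnpos]
      have h1 : |t| ≤ ⌈|t|⌉₊ := Nat.le_ceil _
      have h2 : ((⌈|t|⌉₊ : ℝ)) + 1 ≤ (n:ℝ) := by rw [hn]; push_cast; linarith
      nlinarith [Nat.cast_nonneg (α := ℝ) ⌈|t|⌉₊]
    have hmulR : (n:ℝ) * (t / n) = t := by field_simp
    have hmulC : (n:ℂ) * ((t/n : ℝ):ℂ) = (t:ℂ) := by
      rw [← Complex.ofReal_natCast, ← Complex.ofReal_mul, hmulR]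
    have key : (t:ℂ) • a = (n:ℂ) • (((t/n : ℝ):ℂ) • a) := by
      rw [smul_smul, hmulC]
    rw [key, hnat n, hreal2 _ htn, smul_smul, hmulC]
  -- full complex homogeneity
  have hC : ∀ (z : ℂ) (a : 𝒜), f (z • a) = z • f a := by
    intro z a
    have hIm : ‖Complex.I‖ = 1 := by simp
    have hz : z • a = (z.re : ℂ) • a + ((z.im:ℝ) : ℂ) • (Complex.I • a) := by
      match_scalars
      linear_combination -Complex.re_add_im z
    rw [hz, hadd, hrealAll, hrealAll, hmu Complex.I hIm]
    match_scalars
    linear_combination Complex.re_add_im z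
  -- the derivation defect
  have hJd : ∀ c : 𝒜, jensenDefect 𝒜 hA r f 1 0 0 c =
      (f (cube 𝒜 hA c) : H →L[ℂ] K) -
      ((f c : H →L[ℂ] K) ∘L adjoint (c : H →L[ℂ] K)) ∘L (c : H →L[ℂ] K) -
      ((c : H →L[ℂ] K) ∘L adjoint (f c : H →L[ℂ] K)) ∘L (c : H →L[ℂ] K) -
      ((c : H →L[ℂ] K) ∘L adjoint (c : H →L[ℂ] K)) ∘L (f c : H →L[ℂ] K) := by
    intro c
    simp [jensenDefect, hf0]
  have hcubeScale : ∀ c : 𝒜, cube 𝒜 hA ((r:ℂ) • c) = ((r:ℂ)^3) • cube 𝒜 hA c := by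
    intro c
    apply Subtype.ext
    push_cast [cube, Submodule.coe_smul]
    rw [map_smulₛₗ adjoint (r:ℂ) (c : H →L[ℂ] K), Complex.conj_ofReal]
    simp only [smul_comp, comp_smul, smul_smul]
    ring_nf
  have hJdScale : ∀ c : 𝒜, jensenDefect 𝒜 hA r f 1 0 0 ((r:ℂ) • c)
      = ((r:ℂ)^3) • jensenDefect 𝒜 hA r f 1 0 0 c := by
    intro c
    rw [hJd, hJd, hcubeScale, hC ((r:ℂ)^3), hfr]
    push_cast [Submodule.coe_smul]
    rw [map_smulₛₗ adjoint (r:ℂ) (c : H →L[ℂ] K), Complex.conj_ofReal]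
    rw [map_smulₛₗ adjoint (r:ℂ) ((f c) : H →L[ℂ] K), Complex.conj_ofReal]
    simp only [smul_comp, comp_smul, smul_smul, smul_sub]
    ring_nf
  have hJdZero : ∀ c : 𝒜, jensenDefect 𝒜 hA r f 1 0 0 c = 0 := by
    intro c
    apply eq_zero_of_norm_le_geom _ (φ 0 0 c) (L / r^2) (by positivity)
      (by
        have h1 : (1:ℝ) < r^2 := by nlinarith
        calc L / r^2 ≤ L := by
              rw [div_le_iff₀ (by positivity)]
              nlinarith
            _ < 1 := hL1)
    intro n
    have hpow : ∀ m : ℕ, jensenDefect 𝒜 hA r f 1 0 0 ((r:ℂ)^m • c)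
        = ((r:ℂ)^3)^m • jensenDefect 𝒜 hA r f 1 0 0 c := by
      intro m
      induction m with
      | zero => simp
      | succ m ih =>
        have e : (r:ℂ)^(m+1) • c = (r:ℂ) • ((r:ℂ)^m • c) := by
          match_scalars; ring
        rw [e, hJdScale, ih, smul_smul]
        congr 1
        ring
    have hb0 := hineq 1 (by simp) 0 0 ((r:ℂ)^n • c)
    rw [hpow n] at hb0
    have hnr : ‖((r:ℂ)^3)^n‖ = (r^3)^n := by
      rw [norm_pow, norm_pow, Complex.norm_real, Real.norm_eq_abs, abs_of_pos hr0]
    have hb : (r^3)^n * ‖jensenDefect 𝒜 hA r f 1 0 0 c‖ ≤ φ 0 0 ((r:ℂ)^n • c) := by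
      rw [← hnr, ← norm_smul]; exact hb0
    have hb2 : φ 0 0 ((r:ℂ)^n • c) ≤ (r*L)^n * φ 0 0 c := by
      have h := hφn n 0 0 c
      rwa [smul_zero] at h
    have hkey : (r*L)^n = (r^3)^n * ((L/r^2)^n) := by
      rw [← mul_pow]
      congr 1
      field_simp
    have h3 : (r^3)^n * ‖jensenDefect 𝒜 hA r f 1 0 0 c‖
        ≤ (r^3)^n * ((L/r^2)^n * φ 0 0 c) := by
      calc (r^3)^n * ‖jensenDefect 𝒜 hA r f 1 0 0 c‖ ≤ (r*L)^n * φ 0 0 c :=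
            le_trans hb hb2
        _ = (r^3)^n * ((L/r^2)^n * φ 0 0 c) := by rw [hkey]; ring
    exact le_of_mul_le_mul_left h3 (pow_pos (by positivity) n)
  refine ⟨hadd, hC, ?_⟩
  intro c
  have h := hJdZero c
  rw [hJd, sub_sub, sub_sub, sub_eq_zero] at h
  rw [h]
  abel
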